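/- Let X be a real random variable with probability density f(x) = K₀(|x|)/π, and define n(α, ν) := E[tanh(αX + ν)]. Then for ν ≥ 0, n(α, ν) is nonincreasing in α ≥ 0 for each fixed ν, nondecreasing in ν ≥ 0 for each fixed α, and satisfies 0 ≤ n(α, ν) ≤ n(0, ν) = tanh(ν) ≤ 1 for all α, ν ≥ 0. -/

import Mathlib

open Real MeasureTheory

/-- Modified Bessel function of the second kind of order 0, via its integral
representation `K₀(x) = ∫₀^∞ exp(-x cosh t) dt`. -/
noncomputable def besselK0 (x : ℝ) : ℝ :=
  ∫ t in Set.Ioi (0 : ℝ), Real.exp (-x * Real.cosh t)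

/-- The probability density `x ↦ K₀(|x|)/π` on ℝ. -/
noncomputable def besselDensity (x : ℝ) : ℝ := besselK0 |x| / Real.pi

/-- The population EM expectation `n(α, ν) = E[tanh(αX + ν)]`. -/
noncomputable def nExp (α ν : ℝ) : ℝ :=
  ∫ x : ℝ, Real.tanh (α * x + ν) * besselDensity x

open Set

section Aux

lemma continuous_tanh' : Continuous Real.tanh := by
  have : Real.tanh = fun x => Real.sinh x / Real.cosh x := funext Real.tanh_eq_sinh_div_cosh
  rw [this]
  exact Real.continuous_sinh.div Real.continuous_cosh fun x => (Real.cosh_pos x).ne'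

lemma abs_sinh_le_cosh (x : ℝ) : |Real.sinh x| ≤ Real.cosh x := by
  rw [abs_le]
  constructor
  · nlinarith [Real.cosh_add_sinh x, Real.exp_pos x]
  · nlinarith [Real.cosh_sub_sinh x, Real.exp_pos (-x)]

lemma abs_tanh_le_one (x : ℝ) : |Real.tanh x| ≤ 1 := by
  rw [Real.tanh_eq_sinh_div_cosh, abs_div, abs_of_pos (Real.cosh_pos x),
    div_le_one (Real.cosh_pos x)]
  exact abs_sinh_le_cosh x

lemma tanh_sum (a v : ℝ) :
    Real.tanh (a + v) + Real.tanh (v - a)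
      = 2 * Real.sinh (2 * v) / (Real.cosh (2 * v) + Real.cosh (2 * a)) := by
  have h1 := Real.cosh_pos (a + v)
  have h2 := Real.cosh_pos (v - a)
  have e1 : Real.sinh (a + v) * Real.cosh (v - a) + Real.cosh (a + v) * Real.sinh (v - a)
      = Real.sinh (2 * v) := by
    rw [show (2:ℝ) * v = v + v by ring]
    simp only [Real.sinh_add, Real.sinh_sub, Real.cosh_add, Real.cosh_sub]
    linear_combination 2 * Real.sinh v * Real.cosh v * Real.cosh_sq a
  have e2 : Real.cosh (a + v) * Real.cosh (v - a)
      = (Real.cosh (2 * v) + Real.cosh (2 * a)) / 2 := by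
    rw [show (2:ℝ) * v = v + v by ring, show (2:ℝ) * a = a + a by ring]
    simp only [Real.cosh_add, Real.cosh_sub, Real.sinh_add, Real.sinh_sub]
    linear_combination (Real.sinh v ^ 2 + 1/2) * Real.cosh_sq a
      + (Real.cosh a ^ 2 - 1/2) * Real.cosh_sq v
  rw [Real.tanh_eq_sinh_div_cosh, Real.tanh_eq_sinh_div_cosh,
    div_add_div _ _ h1.ne' h2.ne', e1, e2, div_div_eq_mul_div]
  ring

lemma hasDerivAt_sech_anti (t : ℝ) :
    HasDerivAt (fun t => 2 * Real.arctan (Real.exp t)) (1 / Real.cosh t) t := by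
  have h := ((Real.hasDerivAt_arctan (Real.exp t)).comp t (Real.hasDerivAt_exp t)).const_mul 2
  refine h.congr_deriv ?_
  rw [Real.cosh_eq]
  have h1 : (0:ℝ) < Real.exp t := Real.exp_pos t
  rw [Real.exp_neg]
  field_simp
  ring

lemma tendsto_sech_anti :
    Filter.Tendsto (fun t => 2 * Real.arctan (Real.exp t)) Filter.atTop (nhds π) := by
  have h1 : Filter.Tendsto Real.arctan Filter.atTop (nhds (π / 2)) :=
    Real.tendsto_arctan_atTop.mono_right nhdsWithin_le_nhds
  have := (h1.comp Real.tendsto_exp_atTop).const_mul (2:ℝ)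
  simpa [mul_div_cancel₀] using this

lemma integrableOn_sech : IntegrableOn (fun t => 1 / Real.cosh t) (Ioi (0:ℝ)) :=
  integrableOn_Ioi_deriv_of_nonneg' (fun x _ => hasDerivAt_sech_anti x)
    (fun x _ => by positivity) tendsto_sech_anti

lemma integral_sech : ∫ t in Ioi (0:ℝ), 1 / Real.cosh t = π / 2 := by
  rw [integral_Ioi_of_hasDerivAt_of_nonneg' (fun x _ => hasDerivAt_sech_anti x)
    (fun x _ => by positivity) tendsto_sech_anti]
  simp [Real.arctan_one]
  ring

lemma integral_exp_neg_mul {c : ℝ} (hc : 0 < c) :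
    ∫ x in Ioi (0:ℝ), Real.exp (-(c * x)) = 1 / c := by
  have hd : ∀ x ∈ Ici (0:ℝ), HasDerivAt (fun x => -Real.exp (-(c * x)) / c)
      (Real.exp (-(c * x))) x := by
    intro x _
    have h0 : HasDerivAt (fun x : ℝ => -(c * x)) (-c) x := by
      exact ((hasDerivAt_id' x).const_mul c).neg.congr_deriv (by ring)
    have h : HasDerivAt (fun x => Real.exp (-(c * x))) (Real.exp (-(c * x)) * (-c)) x :=
      (Real.hasDerivAt_exp _).comp x h0
    refine (h.neg.div_const c).congr_deriv ?_
    rw [mul_neg, neg_neg, mul_div_assoc, div_self hc.ne', mul_one]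
  have hi : IntegrableOn (fun x => Real.exp (-(c * x))) (Ioi (0:ℝ)) := by
    simpa [neg_mul] using exp_neg_integrableOn_Ioi 0 hc
  have ht : Filter.Tendsto (fun x => -Real.exp (-(c * x)) / c) Filter.atTop (nhds 0) := by
    have h2 : Filter.Tendsto (fun x : ℝ => c * x) Filter.atTop Filter.atTop :=
      Filter.Tendsto.const_mul_atTop hc Filter.tendsto_id
    have h3 : Filter.Tendsto (fun x : ℝ => -(c * x)) Filter.atTop Filter.atBot :=
      Filter.tendsto_neg_atBot_iff.mpr h2
    have h4 := (Real.tendsto_exp_atBot.comp h3).neg.div_const c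
    simpa using h4
  rw [MeasureTheory.integral_Ioi_of_hasDerivAt_of_tendsto' hd hi ht]
  field_simp
  simp

lemma besselK0_nonneg (x : ℝ) : 0 ≤ besselK0 x :=
  setIntegral_nonneg measurableSet_Ioi fun _ _ => (Real.exp_pos _).le

lemma besselK0_stronglyMeasurable : StronglyMeasurable besselK0 := by
  have hsm : StronglyMeasurable (fun p : ℝ × ℝ => Real.exp (-p.1 * Real.cosh p.2)) :=
    (by fun_prop : Continuous (fun p : ℝ × ℝ => Real.exp (-p.1 * Real.cosh p.2))).stronglyMeasurable
  exact hsm.integral_prod_right' (ν := volume.restrict (Ioi 0))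

lemma besselK0_abs_measurable : Measurable (fun x : ℝ => besselK0 |x|) :=
  besselK0_stronglyMeasurable.measurable.comp measurable_abs

lemma integrableOn_exp_cosh {c : ℝ} (hc : 0 < c) :
    IntegrableOn (fun t => Real.exp (-c * Real.cosh t)) (Ioi (0:ℝ)) := by
  have hi : IntegrableOn (fun t => Real.exp (-(c * t))) (Ioi (0:ℝ)) := by
    simpa [neg_mul] using exp_neg_integrableOn_Ioi 0 hc
  refine hi.mono' ?_ ?_
  · exact ((by fun_prop : Continuous fun t : ℝ => Real.exp (-c * Real.cosh t))).aestronglyMeasurable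
  · refine (ae_restrict_iff' measurableSet_Ioi).mpr (ae_of_all _ fun t ht => ?_)
    rw [Real.norm_eq_abs, abs_of_pos (Real.exp_pos _), Real.exp_le_exp]
    have h1 : t ≤ Real.sinh t := (Real.self_lt_sinh_iff.mpr ht).le
    have h2 : Real.sinh t ≤ Real.cosh t := by
      nlinarith [Real.cosh_sub_sinh t, Real.exp_pos (-t)]
    nlinarith

lemma besselK0_ofReal {c : ℝ} (hc : 0 < c) :
    ENNReal.ofReal (besselK0 c)
      = ∫⁻ t in Ioi (0:ℝ), ENNReal.ofReal (Real.exp (-c * Real.cosh t)) := by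
  rw [besselK0]
  exact ofReal_integral_eq_lintegral_ofReal (integrableOn_exp_cosh hc)
    (ae_of_all _ fun t => (Real.exp_pos _).le)

lemma integrable_exp_neg_mul_abs {c : ℝ} (hc : 0 < c) :
    Integrable (fun x : ℝ => Real.exp (-(c * |x|))) := by
  have h1 : IntegrableOn (fun x : ℝ => Real.exp (-(c * |x|))) (Ioi 0) := by
    have hi : IntegrableOn (fun x => Real.exp (-(c * x))) (Ioi (0:ℝ)) := by
      simpa [neg_mul] using exp_neg_integrableOn_Ioi 0 hc
    refine hi.congr_fun (fun x hx => ?_) measurableSet_Ioi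
    rw [abs_of_pos hx]
  have h2 : IntegrableOn (fun x : ℝ => Real.exp (-(c * |x|))) (Iic 0) := by
    rw [← Measure.map_neg_eq_self (volume : Measure ℝ)]
    have m : MeasurableEmbedding fun x : ℝ => -x := (Homeomorph.neg ℝ).measurableEmbedding
    rw [m.integrableOn_map_iff]
    simp_rw [Function.comp_def, abs_neg, neg_preimage, neg_Iic, neg_zero]
    exact (integrableOn_Ici_iff_integrableOn_Ioi).mpr h1
  have := h2.union h1
  rwa [Iic_union_Ioi, integrableOn_univ] at this

lemma lintegral_exp_neg_mul_abs {c : ℝ} (hc : 0 < c) :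
    ∫⁻ x : ℝ, ENNReal.ofReal (Real.exp (-(c * |x|))) = ENNReal.ofReal (2 / c) := by
  rw [← ofReal_integral_eq_lintegral_ofReal (integrable_exp_neg_mul_abs hc)
    (ae_of_all _ fun x => (Real.exp_pos _).le)]
  congr 1
  rw [integral_comp_abs (f := fun x => Real.exp (-(c * x))), integral_exp_neg_mul hc]
  ring

lemma lintegral_besselK0_abs :
    ∫⁻ x : ℝ, ENNReal.ofReal (besselK0 |x|) = ENNReal.ofReal π := by
  have h0 : ∀ᵐ x : ℝ, x ≠ 0 := by
    rw [ae_iff]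
    simpa using measure_singleton (0:ℝ)
  have step1 : ∫⁻ x : ℝ, ENNReal.ofReal (besselK0 |x|)
      = ∫⁻ x : ℝ, ∫⁻ t in Ioi (0:ℝ), ENNReal.ofReal (Real.exp (-|x| * Real.cosh t)) := by
    refine lintegral_congr_ae ?_
    filter_upwards [h0] with x hx
    exact besselK0_ofReal (abs_pos.mpr hx)
  rw [step1, lintegral_lintegral_swap]
  · have step2 : ∀ t ∈ Ioi (0:ℝ),
        (∫⁻ x : ℝ, ENNReal.ofReal (Real.exp (-|x| * Real.cosh t)))
          = ENNReal.ofReal (2 / Real.cosh t) := by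
      intro t _
      have h : ∀ x : ℝ, -|x| * Real.cosh t = -(Real.cosh t * |x|) := fun x => by ring
      simp_rw [h]
      exact lintegral_exp_neg_mul_abs (Real.cosh_pos t)
    rw [setLIntegral_congr_fun measurableSet_Ioi step2]
    have hint : IntegrableOn (fun t => 2 / Real.cosh t) (Ioi (0:ℝ)) := by
      have := integrableOn_sech.const_mul 2
      simpa [mul_one_div, div_eq_mul_inv, IntegrableOn] using this
    rw [← ofReal_integral_eq_lintegral_ofReal hint (ae_of_all _ fun t => by positivity)]
    congr 1
    have h : ∀ t : ℝ, 2 / Real.cosh t = 2 * (1 / Real.cosh t) := fun t => by ring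
    simp_rw [h]
    rw [integral_const_mul, integral_sech]
    ring
  · exact ((by fun_prop : Continuous fun p : ℝ × ℝ =>
      Real.exp (-|p.1| * Real.cosh p.2)).measurable.ennreal_ofReal).aemeasurable

lemma integrable_besselK0_abs : Integrable (fun x : ℝ => besselK0 |x|) := by
  refine ⟨besselK0_abs_measurable.aestronglyMeasurable, ?_⟩
  rw [hasFiniteIntegral_iff_ofReal (ae_of_all _ fun x => besselK0_nonneg _)]
  rw [lintegral_besselK0_abs]
  exact ENNReal.ofReal_lt_top

lemma integral_besselK0_abs : ∫ x : ℝ, besselK0 |x| = π := by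
  rw [integral_eq_lintegral_of_nonneg_ae (ae_of_all _ fun x => besselK0_nonneg _)
    besselK0_abs_measurable.aestronglyMeasurable, lintegral_besselK0_abs,
    ENNReal.toReal_ofReal Real.pi_pos.le]

lemma besselDensity_nonneg (x : ℝ) : 0 ≤ besselDensity x :=
  div_nonneg (besselK0_nonneg _) Real.pi_pos.le

lemma besselDensity_neg (x : ℝ) : besselDensity (-x) = besselDensity x := by
  simp [besselDensity, abs_neg]

lemma integrable_besselDensity : Integrable besselDensity :=
  integrable_besselK0_abs.div_const π

lemma integral_besselDensity : ∫ x : ℝ, besselDensity x = 1 := by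
  unfold besselDensity
  rw [integral_div, integral_besselK0_abs, div_self Real.pi_pos.ne']

lemma besselDensity_measurable : Measurable besselDensity :=
  besselK0_abs_measurable.div_const π

lemma integrable_mul_density {g : ℝ → ℝ} (hg : Continuous g) (hb : ∀ y, |g y| ≤ 1) :
    Integrable (fun x => g x * besselDensity x) := by
  refine integrable_besselDensity.mono' ?_ (ae_of_all _ fun x => ?_)
  · exact (hg.measurable.mul besselDensity_measurable).aestronglyMeasurable
  · rw [Real.norm_eq_abs, abs_mul, abs_of_nonneg (besselDensity_nonneg x)]
    calc |g x| * besselDensity x ≤ 1 * besselDensity x :=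
          mul_le_mul_of_nonneg_right (hb x) (besselDensity_nonneg x)
      _ = besselDensity x := one_mul _

lemma abs_S_le_one (ν a : ℝ) :
    |Real.sinh (2 * ν) / (Real.cosh (2 * ν) + Real.cosh (2 * a))| ≤ 1 := by
  have hd : 0 < Real.cosh (2 * ν) + Real.cosh (2 * a) := by positivity
  rw [abs_div, abs_of_pos hd, div_le_one hd]
  have h1 := abs_sinh_le_cosh (2 * ν)
  have h2 := Real.one_le_cosh (2 * a)
  linarith

lemma integrable_S (α ν : ℝ) :
    Integrable (fun x =>
      Real.sinh (2 * ν) / (Real.cosh (2 * ν) + Real.cosh (2 * (α * x))) * besselDensity x) := by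
  refine integrable_mul_density ?_ (fun y => abs_S_le_one ν (α * y))
  refine Continuous.div continuous_const (by fun_prop) fun x => ?_
  positivity

lemma integrable_tanh_density (α ν : ℝ) :
    Integrable (fun x => Real.tanh (α * x + ν) * besselDensity x) :=
  integrable_mul_density (by exact continuous_tanh'.comp (by fun_prop))
    (fun y => abs_tanh_le_one _)

lemma integrable_tanh_density' (α ν : ℝ) :
    Integrable (fun x => Real.tanh (ν - α * x) * besselDensity x) :=
  integrable_mul_density (by exact continuous_tanh'.comp (by fun_prop))
    (fun y => abs_tanh_le_one _)

lemma nExp_eq_sym (α ν : ℝ) :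
    nExp α ν = ∫ x : ℝ,
      Real.sinh (2 * ν) / (Real.cosh (2 * ν) + Real.cosh (2 * (α * x))) * besselDensity x := by
  have h1 : nExp α ν = ∫ x : ℝ, Real.tanh (ν - α * x) * besselDensity x := by
    rw [nExp, ← integral_neg_eq_self (fun x => Real.tanh (α * x + ν) * besselDensity x) volume]
    congr 1
    funext x
    rw [besselDensity_neg, show α * -x + ν = ν - α * x by ring]
  have h2 : ∫ x : ℝ, (Real.tanh (α * x + ν) * besselDensity x
        + Real.tanh (ν - α * x) * besselDensity x)
      = nExp α ν + nExp α ν := by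
    rw [integral_add (integrable_tanh_density α ν) (integrable_tanh_density' α ν),
      ← nExp, ← h1]
  have h3 : ∀ x : ℝ, Real.tanh (α * x + ν) * besselDensity x
        + Real.tanh (ν - α * x) * besselDensity x
      = 2 * (Real.sinh (2 * ν) / (Real.cosh (2 * ν) + Real.cosh (2 * (α * x)))
          * besselDensity x) := by
    intro x
    have := tanh_sum (α * x) ν
    rw [← add_mul, this]
    ring
  simp_rw [h3] at h2
  rw [integral_const_mul] at h2
  linarith

lemma S_mono_nu {u v A : ℝ} (huv : u ≤ v) (hA : 1 ≤ A) :
    Real.sinh (2 * u) / (Real.cosh (2 * u) + A)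
      ≤ Real.sinh (2 * v) / (Real.cosh (2 * v) + A) := by
  have hA0 : (0:ℝ) < A := lt_of_lt_of_le one_pos hA
  have d1 : 0 < Real.cosh (2 * u) + A := by positivity
  have d2 : 0 < Real.cosh (2 * v) + A := by positivity
  rw [div_le_div_iff₀ d1 d2]
  have hs : Real.sinh (2 * u) * Real.cosh (2 * v) - Real.cosh (2 * u) * Real.sinh (2 * v)
      = Real.sinh (2 * u - 2 * v) := (Real.sinh_sub _ _).symm
  have h2 : Real.sinh (2 * u - 2 * v) ≤ 0 := Real.sinh_nonpos_iff.mpr (by linarith)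
  have h3 : Real.sinh (2 * u) ≤ Real.sinh (2 * v) := Real.sinh_le_sinh.mpr (by linarith)
  have h4 : A * Real.sinh (2 * u) ≤ A * Real.sinh (2 * v) :=
    mul_le_mul_of_nonneg_left h3 hA0.le
  nlinarith

end Aux

theorem nExp_monotone :
    (∀ ν : ℝ, 0 ≤ ν → ∀ α α' : ℝ, 0 ≤ α → α ≤ α' → nExp α' ν ≤ nExp α ν) ∧
      (∀ α : ℝ, 0 ≤ α → ∀ ν ν' : ℝ, 0 ≤ ν → ν ≤ ν' → nExp α ν ≤ nExp α ν') ∧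
      (∀ α ν : ℝ, 0 ≤ α → 0 ≤ ν →
        0 ≤ nExp α ν ∧ nExp α ν ≤ nExp 0 ν ∧ nExp 0 ν = Real.tanh ν ∧ Real.tanh ν ≤ 1) := by
  have mono_alpha : ∀ ν : ℝ, 0 ≤ ν → ∀ α α' : ℝ, 0 ≤ α → α ≤ α' → nExp α' ν ≤ nExp α ν := by
    intro ν hν α α' hα hαα'
    rw [nExp_eq_sym, nExp_eq_sym]
    refine integral_mono (integrable_S α' ν) (integrable_S α ν) fun x => ?_
    refine mul_le_mul_of_nonneg_right ?_ (besselDensity_nonneg x)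
    have hs : 0 ≤ Real.sinh (2 * ν) := Real.sinh_nonneg_iff.mpr (by linarith)
    have hco : Real.cosh (2 * (α * x)) ≤ Real.cosh (2 * (α' * x)) := by
      refine Real.cosh_le_cosh.mpr ?_
      rw [abs_mul, abs_mul, abs_mul, abs_mul]
      have : |α| ≤ |α'| := by
        rw [abs_of_nonneg hα, abs_of_nonneg (le_trans hα hαα')]
        exact hαα'
      gcongr
    have d1 : 0 < Real.cosh (2 * ν) + Real.cosh (2 * (α * x)) := by positivity
    gcongr
  refine ⟨mono_alpha, ?_, ?_⟩
  · intro α _ ν ν' _ hνν'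
    rw [nExp_eq_sym, nExp_eq_sym]
    refine integral_mono (integrable_S α ν) (integrable_S α ν') fun x => ?_
    exact mul_le_mul_of_nonneg_right (S_mono_nu hνν' (Real.one_le_cosh _))
      (besselDensity_nonneg x)
  · intro α ν hα hν
    have h0 : nExp 0 ν = Real.tanh ν := by
      rw [nExp]
      simp only [zero_mul, zero_add]
      rw [integral_const_mul, integral_besselDensity, mul_one]
    refine ⟨?_, mono_alpha ν hν 0 α le_rfl hα, h0, (abs_le.mp (abs_tanh_le_one ν)).2⟩
    rw [nExp_eq_sym]
    refine integral_nonneg fun x => ?_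
    refine mul_nonneg (div_nonneg ?_ ?_) (besselDensity_nonneg x)
    · exact Real.sinh_nonneg_iff.mpr (by linarith)
    · positivity
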